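/- Let n ≥ 1 and a_i^{(α)} ∈ ℂⁿ for i ∈ {1,2}, α ∈ {1,2,3}, and set F_i(z) = Σ_{α=1}^3 a_i^{(α)} z^α. Assume condition (A)₄ holds and condition (B)_{4,c} holds for some constant c > 0, and suppose a₁⁽³⁾ = λ·e₁ for some real λ > 0 (e₁ the first standard basis vector of ℂⁿ), a₂⁽³⁾ = 0, and a₂⁽²⁾ = 0. Then c = 3, λ = 1, and there exist mutually orthogonal unit vectors e₂, e₃, e₄ ∈ ℂⁿ, each orthogonal to e₁, such that a₁⁽²⁾ = √3·e₂, a₁⁽¹⁾ = √3·e₃, and a₂⁽¹⁾ = e₄. (That is, the curve is unitarily congruent to V₀⁽¹⁾ ⊕ V₀⁽³⁾ ⊂ G(2,6).) -/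

import Mathlib

open scoped BigOperators
open Complex

noncomputable def hinner {m : ℕ} (u w : Fin m → ℂ) : ℂ :=
  ∑ i, u i * (starRingEnd ℂ) (w i)

noncomputable def gram {m k : ℕ} (v : Fin k → Fin m → ℂ) : ℂ :=
  Matrix.det (Matrix.of fun i j : Fin k => hinner (v i) (v j))

noncomputable def vOne {n : ℕ} (F : ℂ → Fin n → ℂ) (z : ℂ) : Fin (n + 2) → ℂ :=
  Fin.cons 1 (Fin.cons 0 (F z))

noncomputable def vTwo {n : ℕ} (F : ℂ → Fin n → ℂ) (z : ℂ) : Fin (n + 2) → ℂ :=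
  Fin.cons 0 (Fin.cons 1 (F z))

def IsPolyMap {n : ℕ} (F : ℂ → Fin n → ℂ) : Prop :=
  ∀ i : Fin n, ∃ p : Polynomial ℂ, ∀ z : ℂ, F z i = Polynomial.eval z p

def CondA {n : ℕ} (d : ℕ) (F₁ F₂ : ℂ → Fin n → ℂ) : Prop :=
  ∀ z : ℂ,
    1 + hinner (F₁ z) (F₁ z) + hinner (F₂ z) (F₂ z) +
      (hinner (F₁ z) (F₁ z) * hinner (F₂ z) (F₂ z) -
        hinner (F₁ z) (F₂ z) * (starRingEnd ℂ) (hinner (F₁ z) (F₂ z))) =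
    (1 + (Complex.normSq z : ℂ)) ^ d

def CondB {n : ℕ} (d : ℕ) (c : ℝ) (F₁ F₂ : ℂ → Fin n → ℂ) : Prop :=
  ∀ z : ℂ,
    gram ![vOne F₁ z, vTwo F₂ z, deriv (vOne F₁) z, deriv (vTwo F₂) z] =
      (c : ℂ) * (1 + (Complex.normSq z : ℂ)) ^ (2 * d - 4)

noncomputable def F1t (t : ℝ) (z : ℂ) : Fin 4 → ℂ :=
  ![(|t - 2| : ℝ) * z ^ 3, (Real.sqrt t : ℝ) * z,
    ((Real.sqrt ((3 - t) / (4 - t)) * |t - 2| : ℝ)) * z ^ 2,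
    ((Real.sqrt (t / (4 - t)) : ℝ)) * z ^ 2]

noncomputable def F2t (t : ℝ) (z : ℂ) : Fin 4 → ℂ :=
  ![(Real.sqrt (3 - t) : ℝ) * z ^ 2, 0, (Real.sqrt (4 - t) : ℝ) * z, 0]

noncomputable def v1t (t : ℝ) (z : ℂ) : Fin 6 → ℂ := vOne (F1t t) z

noncomputable def v2t (t : ℝ) (z : ℂ) : Fin 6 → ℂ := vTwo (F2t t) z


open Polynomial in
lemma extract1 {N : ℕ} (d : ℕ → ℂ) (h : ∀ z : ℂ, ∑ a ∈ Finset.range N, d a * z ^ a = 0) :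
    ∀ a, a < N → d a = 0 := by
  have hp : (∑ a ∈ Finset.range N, Polynomial.C (d a) * Polynomial.X ^ a) = (0 : ℂ[X]) := by
    apply Polynomial.funext
    intro r
    simpa [Polynomial.eval_finset_sum] using h r
  intro a ha
  have := congrArg (fun p => Polynomial.coeff p a) hp
  simpa [Polynomial.finset_sum_coeff, Polynomial.coeff_C_mul, Polynomial.coeff_X_pow,
    Finset.sum_ite_eq, ha] using this

open Polynomial in
lemma extract2 {N : ℕ} (co : ℕ → ℕ → ℂ)
    (h : ∀ z : ℂ, ∑ a ∈ Finset.range N, ∑ b ∈ Finset.range N,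
      co a b * z ^ a * (starRingEnd ℂ) z ^ b = 0) :
    ∀ a b, a < N → b < N → co a b = 0 := by
  have stepA : ∀ (x : ℝ) (y : ℂ), ∑ a ∈ Finset.range N, ∑ b ∈ Finset.range N,
      co a b * ((x : ℂ) + Complex.I * y) ^ a * ((x : ℂ) - Complex.I * y) ^ b = 0 := by
    intro x
    set p : ℂ[X] := ∑ a ∈ Finset.range N, ∑ b ∈ Finset.range N,
      Polynomial.C (co a b) * (Polynomial.C (x : ℂ) + Polynomial.C Complex.I * Polynomial.X) ^ a *
        (Polynomial.C (x : ℂ) - Polynomial.C Complex.I * Polynomial.X) ^ b with hpdef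
    have hev : ∀ y : ℂ, p.eval y = ∑ a ∈ Finset.range N, ∑ b ∈ Finset.range N,
        co a b * ((x : ℂ) + Complex.I * y) ^ a * ((x : ℂ) - Complex.I * y) ^ b := by
      intro y; simp [hpdef, Polynomial.eval_finset_sum]
    have hzero : p = 0 := by
      apply Polynomial.eq_zero_of_infinite_isRoot
      apply Set.Infinite.mono ?_ (Set.infinite_range_of_injective Complex.ofReal_injective)
      rintro _ ⟨y, rfl⟩
      simp only [Set.mem_setOf_eq, Polynomial.IsRoot, hev]
      rw [show ((x : ℂ) - Complex.I * (y : ℂ)) = (starRingEnd ℂ) ((x : ℂ) + Complex.I * (y : ℂ)) by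
        simp [Complex.conj_ofReal]; ring]
      exact h _
    intro y; rw [← hev y, hzero, Polynomial.eval_zero]
  have stepB : ∀ (x y : ℂ), ∑ a ∈ Finset.range N, ∑ b ∈ Finset.range N,
      co a b * (x + Complex.I * y) ^ a * (x - Complex.I * y) ^ b = 0 := by
    intro x y
    set q : ℂ[X] := ∑ a ∈ Finset.range N, ∑ b ∈ Finset.range N,
      Polynomial.C (co a b) * (Polynomial.X + Polynomial.C (Complex.I * y)) ^ a *
        (Polynomial.X - Polynomial.C (Complex.I * y)) ^ b with hqdef
    have hev : ∀ x' : ℂ, q.eval x' = ∑ a ∈ Finset.range N, ∑ b ∈ Finset.range N,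
        co a b * (x' + Complex.I * y) ^ a * (x' - Complex.I * y) ^ b := by
      intro x'; simp [hqdef, Polynomial.eval_finset_sum]
    have hzero : q = 0 := by
      apply Polynomial.eq_zero_of_infinite_isRoot
      apply Set.Infinite.mono ?_ (Set.infinite_range_of_injective Complex.ofReal_injective)
      rintro _ ⟨x', rfl⟩
      simp only [Set.mem_setOf_eq, Polynomial.IsRoot, hev]
      exact stepA x' y
    rw [← hev x, hzero, Polynomial.eval_zero]
  have h2 : ∀ z w : ℂ, ∑ a ∈ Finset.range N, ∑ b ∈ Finset.range N,
      co a b * z ^ a * w ^ b = 0 := by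
    intro z w
    have e1 : (z + w) / 2 + Complex.I * ((z - w) / (2 * Complex.I)) = z := by
      field_simp; ring
    have e2 : (z + w) / 2 - Complex.I * ((z - w) / (2 * Complex.I)) = w := by
      field_simp; ring
    have := stepB ((z + w) / 2) ((z - w) / (2 * Complex.I))
    rw [e1, e2] at this
    exact this
  intro a b ha hb
  have h3 : ∀ w : ℂ, ∑ b ∈ Finset.range N, co a b * w ^ b = 0 := by
    intro w
    refine extract1 (fun a => ∑ b ∈ Finset.range N, co a b * w ^ b) ?_ a ha
    intro z
    have := h2 z w
    calc ∑ a ∈ Finset.range N, (∑ b ∈ Finset.range N, co a b * w ^ b) * z ^ a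
        = ∑ a ∈ Finset.range N, ∑ b ∈ Finset.range N, co a b * z ^ a * w ^ b := by
          refine Finset.sum_congr rfl fun i _ => ?_
          rw [Finset.sum_mul]
          exact Finset.sum_congr rfl fun j _ => by ring
      _ = 0 := this
  exact extract1 (fun b => co a b) h3 b hb

lemma det_fin_four' (A : Matrix (Fin 4) (Fin 4) ℂ) :
    A.det =
      A 0 0 * A 1 1 * A 2 2 * A 3 3 - A 0 0 * A 1 1 * A 2 3 * A 3 2
      - A 0 0 * A 1 2 * A 2 1 * A 3 3 + A 0 0 * A 1 2 * A 2 3 * A 3 1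
      + A 0 0 * A 1 3 * A 2 1 * A 3 2 - A 0 0 * A 1 3 * A 2 2 * A 3 1
      - A 0 1 * A 1 0 * A 2 2 * A 3 3 + A 0 1 * A 1 0 * A 2 3 * A 3 2
      + A 0 1 * A 1 2 * A 2 0 * A 3 3 - A 0 1 * A 1 2 * A 2 3 * A 3 0
      - A 0 1 * A 1 3 * A 2 0 * A 3 2 + A 0 1 * A 1 3 * A 2 2 * A 3 0
      + A 0 2 * A 1 0 * A 2 1 * A 3 3 - A 0 2 * A 1 0 * A 2 3 * A 3 1
      - A 0 2 * A 1 1 * A 2 0 * A 3 3 + A 0 2 * A 1 1 * A 2 3 * A 3 0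
      + A 0 2 * A 1 3 * A 2 0 * A 3 1 - A 0 2 * A 1 3 * A 2 1 * A 3 0
      - A 0 3 * A 1 0 * A 2 1 * A 3 2 + A 0 3 * A 1 0 * A 2 2 * A 3 1
      + A 0 3 * A 1 1 * A 2 0 * A 3 2 - A 0 3 * A 1 1 * A 2 2 * A 3 0
      - A 0 3 * A 1 2 * A 2 0 * A 3 1 + A 0 3 * A 1 2 * A 2 1 * A 3 0 := by
  rw [Matrix.det_succ_row_zero]
  simp [Fin.sum_univ_succ, Matrix.det_fin_three, Fin.succAbove,
    show (Fin.succ (2:Fin 3)) = (3:Fin 4) from rfl,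
    show (Fin.castSucc (2:Fin 3)) = (2:Fin 4) from rfl,
    show ((1:Fin 4) < 3) from by decide, show ¬((2:Fin 4) < 1) from by decide,
    show ((2:Fin 4) < 3) from by decide, show ¬((1:Fin 4) < 1) from by decide]
  ring

lemma hinner_add_left {m : ℕ} (u v w : Fin m → ℂ) :
    hinner (u + v) w = hinner u w + hinner v w := by
  simp [hinner, add_mul, Finset.sum_add_distrib]

lemma hinner_add_right {m : ℕ} (u v w : Fin m → ℂ) :
    hinner u (v + w) = hinner u v + hinner u w := by
  simp [hinner, mul_add, Finset.sum_add_distrib]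

lemma hinner_smul_left {m : ℕ} (c : ℂ) (u w : Fin m → ℂ) :
    hinner (c • u) w = c * hinner u w := by
  simp [hinner, Finset.mul_sum, mul_assoc]

lemma hinner_smul_right {m : ℕ} (c : ℂ) (u w : Fin m → ℂ) :
    hinner u (c • w) = (starRingEnd ℂ) c * hinner u w := by
  simp [hinner, Finset.mul_sum]
  exact Finset.sum_congr rfl fun i _ => by ring

lemma hinner_conj {m : ℕ} (u w : Fin m → ℂ) :
    hinner w u = (starRingEnd ℂ) (hinner u w) := by
  simp [hinner, map_sum]
  exact Finset.sum_congr rfl fun i _ => by ring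

lemma hinner_cons {m : ℕ} (x y : ℂ) (u w : Fin m → ℂ) :
    hinner (Fin.cons x u) (Fin.cons y w) = x * (starRingEnd ℂ) y + hinner u w := by
  simp [hinner, Fin.sum_univ_succ]

set_option linter.unreachableTactic false in
set_option linter.unusedTactic false in
lemma hasDerivAt_cubic {n : ℕ} (x y : ℂ) (a b c : Fin n → ℂ) (z : ℂ) :
    HasDerivAt (fun z : ℂ => (Fin.cons x (Fin.cons y (z • a + z ^ 2 • b + z ^ 3 • c)) : Fin (n+2) → ℂ))
      (Fin.cons 0 (Fin.cons 0 (a + (2 * z) • b + (3 * z ^ 2) • c))) z := by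
  rw [hasDerivAt_pi]
  intro i
  refine Fin.cases ?_ (fun j => ?_) i
  · simpa using hasDerivAt_const z x
  refine Fin.cases ?_ (fun k => ?_) j
  · simpa using hasDerivAt_const z y
  · have h1 : HasDerivAt (fun w : ℂ => w * a k) (a k) z := by
      simpa using (hasDerivAt_id z).mul_const (a k)
    have h2 : HasDerivAt (fun w : ℂ => w ^ 2 * b k) (2 * z * b k) z := by
      have := (hasDerivAt_pow 2 z).mul_const (b k)
      simpa [mul_comm, mul_assoc] using this
    have h3 : HasDerivAt (fun w : ℂ => w ^ 3 * c k) (3 * z ^ 2 * c k) z := by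
      have := (hasDerivAt_pow 3 z).mul_const (c k)
      norm_num at this
      simpa [mul_comm, mul_assoc] using this
    have := (h1.add h2).add h3
    simp only [Fin.cons_succ, Pi.add_apply, Pi.smul_apply, smul_eq_mul]
    convert this using 1 <;> try ring
    funext w
    simp only [Pi.add_apply]
    ring

lemma deriv_vOne_cubic {n : ℕ} (a b c : Fin n → ℂ) (z : ℂ) :
    deriv (vOne (fun z : ℂ => z • a + z ^ 2 • b + z ^ 3 • c)) z
      = Fin.cons 0 (Fin.cons 0 (a + (2 * z) • b + (3 * z ^ 2) • c)) :=
  (hasDerivAt_cubic 1 0 a b c z).deriv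

lemma deriv_vTwo_cubic {n : ℕ} (a b c : Fin n → ℂ) (z : ℂ) :
    deriv (vTwo (fun z : ℂ => z • a + z ^ 2 • b + z ^ 3 • c)) z
      = Fin.cons 0 (Fin.cons 0 (a + (2 * z) • b + (3 * z ^ 2) • c)) :=
  (hasDerivAt_cubic 0 1 a b c z).deriv

set_option maxHeartbeats 2000000 in
theorem stmt8 (n : ℕ) (hn : 0 < n) (a11 a21 a12 a22 a13 a23 : Fin n → ℂ)
    (c lam : ℝ) (hc : 0 < c) (hlam : 0 < lam)
    (ha13 : a13 = fun (j : Fin n) => if (j : ℕ) = 0 then ((lam : ℝ) : ℂ) else 0)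
    (ha23 : a23 = 0) (ha22 : a22 = 0)
    (hA : CondA 4 (fun z => z • a11 + z ^ 2 • a12 + z ^ 3 • a13)
      (fun z => z • a21 + z ^ 2 • a22 + z ^ 3 • a23))
    (hB : CondB 4 c (fun z => z • a11 + z ^ 2 • a12 + z ^ 3 • a13)
      (fun z => z • a21 + z ^ 2 • a22 + z ^ 3 • a23)) :
    c = 3 ∧ lam = 1 ∧
      ∃ e2 e3 e4 : Fin n → ℂ,
        hinner e2 e2 = 1 ∧ hinner e3 e3 = 1 ∧ hinner e4 e4 = 1 ∧
        hinner e2 e3 = 0 ∧ hinner e2 e4 = 0 ∧ hinner e3 e4 = 0 ∧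
        hinner e2 (fun (j : Fin n) => if (j : ℕ) = 0 then (1 : ℂ) else 0) = 0 ∧
        hinner e3 (fun (j : Fin n) => if (j : ℕ) = 0 then (1 : ℂ) else 0) = 0 ∧
        hinner e4 (fun (j : Fin n) => if (j : ℕ) = 0 then (1 : ℂ) else 0) = 0 ∧
        a12 = ((Real.sqrt 3 : ℝ) : ℂ) • e2 ∧
        a11 = ((Real.sqrt 3 : ℝ) : ℂ) • e3 ∧
        a21 = e4 := by
  subst ha22 ha23
  -- coefficient equations from Condition (A)
  have keyA : ∀ a b : ℕ, a < 5 → b < 5 → (fun a b : ℕ => if a = 1 then (if b = 1 then ((-4:ℂ) + (1:ℂ)*(hinner a21 a21) + (1:ℂ)*(hinner a11 a11)) else if b = 2 then ((1:ℂ)*(hinner a11 a12)) else if b = 3 then ((1:ℂ)*(hinner a11 a13)) else (0:ℂ)) else if a = 2 then (if b = 1 then ((1:ℂ)*(hinner a12 a11)) else if b = 2 then ((-6:ℂ) + (-1:ℂ)*(hinner a11 a21)*(hinner a21 a11) + (1:ℂ)*(hinner a12 a12) + (1:ℂ)*(hinner a11 a11)*(hinner a21 a21)) else if b = 3 then ((-1:ℂ)*(hinner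 a11 a21)*(hinner a21 a12) + (1:ℂ)*(hinner a12 a13) + (1:ℂ)*(hinner a21 a21)*(hinner a11 a12)) else if b = 4 then ((-1:ℂ)*(hinner a11 a21)*(hinner a21 a13) + (1:ℂ)*(hinner a21 a21)*(hinner a11 a13)) else (0:ℂ)) else if a = 3 then (if b = 1 then ((1:ℂ)*(hinner a13 a11)) else if b = 2 then ((-1:ℂ)*(hinner a21 a11)*(hinner a12 a21) + (1:ℂ)*(hinner a13 a12) + (1:ℂ)*(hinner a21 a21)*(hinner a12 a11)) else if b = 3 then ((-4:ℂ) + (-1:ℂ)*(hinner a12 a21)*(hinner a21 a12) + (1:ℂ)*(hinner a13 a13) + (1:ℂ)*(hinner a12 a12)*(hinner a21 a21)) else if b = 4 then ((-1:ℂ)*(hinner a12 a21)*(hinner a21 a13) + (1:ℂ)*(hinner a21 a21)*(hinner a12 a13)) else (0:ℂ)) else if a = 4 then (if b = 2 then ((-1:ℂ)*(hinner a21 a11)*(hinner a13 a21) + (1:ℂ)*(hinner a21 a21)*(hinner a13 a11)) else if b = 3 then ((-1:ℂ)*(hinner a21 a12)*(hinner a13 a21) + (1:ℂ)*(hinner a21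 a21)*(hinner a13 a12)) else if b = 4 then ((-1:ℂ) + (-1:ℂ)*(hinner a13 a21)*(hinner a21 a13) + (1:ℂ)*(hinner a13 a13)*(hinner a21 a21)) else (0:ℂ)) else (0:ℂ)) a b = 0 := by
    apply extract2
    intro z
    have h := hA z
    simp only [hinner_add_left, hinner_add_right, hinner_smul_left, hinner_smul_right,
      smul_zero, add_zero, map_pow, map_one, map_zero, map_mul, map_add, map_ofNat,
      Complex.conj_conj, ← hinner_conj] at h
    rw [← Complex.mul_conj] at h
    simp only [Finset.sum_range_succ, Finset.sum_range_zero]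
    norm_num
    linear_combination h
  -- coefficient equations from Condition (B)
  have keyB : ∀ a b : ℕ, a < 5 → b < 5 → (fun a b : ℕ => if a = 0 then (if b = 0 then ((-1:ℂ)*((c:ℝ):ℂ) + (-1:ℂ)*(hinner a11 a21)*(hinner a21 a11) + (1:ℂ)*(hinner a11 a11)*(hinner a21 a21)) else if b = 1 then ((-2:ℂ)*(hinner a11 a21)*(hinner a21 a12) + (2:ℂ)*(hinner a21 a21)*(hinner a11 a12)) else if b = 2 then ((-3:ℂ)*(hinner a11 a21)*(hinner a21 a13) + (3:ℂ)*(hinner a21 a21)*(hinner a11 a13)) else (0:ℂ)) else if a = 1 then (if b = 0 then ((-2:ℂ)*(hinner a21 a11)*(hinner a12 a21) + (2:ℂ)*(hinner a21 a21)*(hinner a12 a11)) else if b = 1 then ((-4:ℂ)*((c:ℝ):ℂ) + (-4:ℂ)*(hinner a12 a21)*(hinner a21 a12) + (4:ℂ)*(hinner a12 a12)*(hinner a21 a21)) else if b = 2 then ((-6:ℂ)*(hinner a12 a21)*(hinner a21 a13) + (6:ℂ)*(hinner a21 a21)*(hinner a12 a13)) else (0:ℂ)) else if a = 2 then (if b =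 0 then ((-3:ℂ)*(hinner a21 a11)*(hinner a13 a21) + (3:ℂ)*(hinner a21 a21)*(hinner a13 a11)) else if b = 1 then ((-6:ℂ)*(hinner a21 a12)*(hinner a13 a21) + (6:ℂ)*(hinner a21 a21)*(hinner a13 a12)) else if b = 2 then ((-6:ℂ)*((c:ℝ):ℂ) + (-9:ℂ)*(hinner a13 a21)*(hinner a21 a13) + (1:ℂ)*(hinner a12 a11)*(hinner a11 a21)*(hinner a21 a12) + (1:ℂ)*(hinner a11 a12)*(hinner a21 a11)*(hinner a12 a21) + (-1:ℂ)*(hinner a21 a21)*(hinner a11 a12)*(hinner a12 a11) + (9:ℂ)*(hinner a13 a13)*(hinner a21 a21) + (-1:ℂ)*(hinner a12 a12)*(hinner a11 a21)*(hinner a21 a11) + (-1:ℂ)*(hinner a11 a11)*(hinner a12 a21)*(hinner a21 a12) + (1:ℂ)*(hinner a11 a11)*(hinner a12 a12)*(hinner a21 a21)) else if b = 3 then ((-2:ℂ)*(hinner a12 a13)*(hinner a11 a21)*(hinner a21 a11) + (2:ℂ)*(hinner a11 a13)*(hinner a21 a11)*(hinner a12 a21) + (2:ℂ)*(hinner a12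 a11)*(hinner a11 a21)*(hinner a21 a13) + (-2:ℂ)*(hinner a21 a21)*(hinner a12 a11)*(hinner a11 a13) + (-2:ℂ)*(hinner a11 a11)*(hinner a12 a21)*(hinner a21 a13) + (2:ℂ)*(hinner a11 a11)*(hinner a21 a21)*(hinner a12 a13)) else if b = 4 then ((-1:ℂ)*(hinner a12 a13)*(hinner a11 a21)*(hinner a21 a12) + (1:ℂ)*(hinner a11 a13)*(hinner a12 a21)*(hinner a21 a12) + (-1:ℂ)*(hinner a11 a12)*(hinner a12 a21)*(hinner a21 a13) + (1:ℂ)*(hinner a21 a21)*(hinner a11 a12)*(hinner a12 a13) + (1:ℂ)*(hinner a12 a12)*(hinner a11 a21)*(hinner a21 a13) + (-1:ℂ)*(hinner a12 a12)*(hinner a21 a21)*(hinner a11 a13)) else (0:ℂ)) else if a = 3 then (if b = 2 then ((-2:ℂ)*(hinner a13 a12)*(hinner a11 a21)*(hinner a21 a11) + (2:ℂ)*(hinner a13 a11)*(hinner a11 a21)*(hinner a21 a12) + (2:ℂ)*(hinner a11 a12)*(hinner a21 a11)*(hinner a13 a21) + (-2:ℂ)*(hinner a21 a21)*(hinner a11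 a12)*(hinner a13 a11) + (-2:ℂ)*(hinner a11 a11)*(hinner a21 a12)*(hinner a13 a21) + (2:ℂ)*(hinner a11 a11)*(hinner a21 a21)*(hinner a13 a12)) else if b = 3 then ((-4:ℂ)*((c:ℝ):ℂ) + (4:ℂ)*(hinner a13 a11)*(hinner a11 a21)*(hinner a21 a13) + (4:ℂ)*(hinner a11 a13)*(hinner a21 a11)*(hinner a13 a21) + (-4:ℂ)*(hinner a21 a21)*(hinner a11 a13)*(hinner a13 a11) + (-4:ℂ)*(hinner a13 a13)*(hinner a11 a21)*(hinner a21 a11) + (-4:ℂ)*(hinner a11 a11)*(hinner a13 a21)*(hinner a21 a13) + (4:ℂ)*(hinner a11 a11)*(hinner a13 a13)*(hinner a21 a21)) else if b = 4 then ((2:ℂ)*(hinner a13 a12)*(hinner a11 a21)*(hinner a21 a13) + (2:ℂ)*(hinner a11 a13)*(hinner a21 a12)*(hinner a13 a21) + (-2:ℂ)*(hinner a11 a12)*(hinner a13 a21)*(hinner a21 a13) + (-2:ℂ)*(hinner a21 a21)*(hinner a11 a13)*(hinner a13 a12) + (-2:ℂ)*(hinner a13 a13)*(hinner a11 a21)*(hinner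 a21 a12) + (2:ℂ)*(hinner a13 a13)*(hinner a21 a21)*(hinner a11 a12)) else (0:ℂ)) else if a = 4 then (if b = 2 then ((-1:ℂ)*(hinner a13 a12)*(hinner a21 a11)*(hinner a12 a21) + (1:ℂ)*(hinner a13 a11)*(hinner a12 a21)*(hinner a21 a12) + (-1:ℂ)*(hinner a12 a11)*(hinner a21 a12)*(hinner a13 a21) + (1:ℂ)*(hinner a21 a21)*(hinner a12 a11)*(hinner a13 a12) + (1:ℂ)*(hinner a12 a12)*(hinner a21 a11)*(hinner a13 a21) + (-1:ℂ)*(hinner a12 a12)*(hinner a21 a21)*(hinner a13 a11)) else if b = 3 then ((2:ℂ)*(hinner a12 a13)*(hinner a21 a11)*(hinner a13 a21) + (2:ℂ)*(hinner a13 a11)*(hinner a12 a21)*(hinner a21 a13) + (-2:ℂ)*(hinner a12 a11)*(hinner a13 a21)*(hinner a21 a13) + (-2:ℂ)*(hinner a21 a21)*(hinner a13 a11)*(hinner a12 a13) + (-2:ℂ)*(hinner a13 a13)*(hinner a21 a11)*(hinner a12 a21) + (2:ℂ)*(hinner a13 a13)*(hinner a21 a21)*(hinner a12 a11)) else if b =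 4 then ((-1:ℂ)*((c:ℝ):ℂ) + (1:ℂ)*(hinner a13 a12)*(hinner a12 a21)*(hinner a21 a13) + (1:ℂ)*(hinner a12 a13)*(hinner a21 a12)*(hinner a13 a21) + (-1:ℂ)*(hinner a21 a21)*(hinner a12 a13)*(hinner a13 a12) + (-1:ℂ)*(hinner a13 a13)*(hinner a12 a21)*(hinner a21 a12) + (-1:ℂ)*(hinner a12 a12)*(hinner a13 a21)*(hinner a21 a13) + (1:ℂ)*(hinner a12 a12)*(hinner a13 a13)*(hinner a21 a21)) else (0:ℂ)) else (0:ℂ)) a b = 0 := by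
    apply extract2
    intro z
    have h := hB z
    rw [deriv_vOne_cubic, deriv_vTwo_cubic] at h
    simp only [gram, det_fin_four', Matrix.of_apply, Matrix.cons_val', Matrix.cons_val_zero,
      Matrix.cons_val_one, Matrix.head_cons, Matrix.cons_val_two, Matrix.cons_val_three,
      Matrix.vecHead, Matrix.vecTail, Matrix.empty_val', Matrix.cons_val_fin_one,
      Matrix.head_fin_const, Matrix.cons_val_succ, Function.comp_apply] at h
    simp only [vOne, vTwo, hinner_cons,
      hinner_add_left, hinner_add_right, hinner_smul_left, hinner_smul_right,
      smul_zero, add_zero, zero_add, mul_zero, zero_mul, mul_one, one_mul,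
      map_pow, map_one, map_zero, map_mul, map_add, map_ofNat,
      Complex.conj_conj, ← hinner_conj] at h
    rw [show (2*4-4 : ℕ) = 4 from rfl, ← Complex.mul_conj] at h
    simp only [Finset.sum_range_succ, Finset.sum_range_zero]
    norm_num
    linear_combination h
    -- extract the needed coefficient equations
  have eA11 : (-4:ℂ) + (1:ℂ)*(hinner a21 a21) + (1:ℂ)*(hinner a11 a11) = 0 := by
    have h := keyA 1 1 (by norm_num) (by norm_num)
    norm_num at h
    linear_combination h
  have hal0 : (1:ℂ)*(hinner a11 a12) = 0 := by
    have h := keyA 1 2 (by norm_num) (by norm_num)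
    norm_num at h
    linear_combination h
  have hbe0 : (1:ℂ)*(hinner a11 a13) = 0 := by
    have h := keyA 1 3 (by norm_num) (by norm_num)
    norm_num at h
    linear_combination h
  have halb0 : (1:ℂ)*(hinner a12 a11) = 0 := by
    have h := keyA 2 1 (by norm_num) (by norm_num)
    norm_num at h
    linear_combination h
  have hbeb0 : (1:ℂ)*(hinner a13 a11) = 0 := by
    have h := keyA 3 1 (by norm_num) (by norm_num)
    norm_num at h
    linear_combination h
  have eA22 : (-6:ℂ) + (-1:ℂ)*(hinner a11 a21)*(hinner a21 a11) + (1:ℂ)*(hinner a12 a12) + (1:ℂ)*(hinner a11 a11)*(hinner a21 a21) = 0 := by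
    have h := keyA 2 2 (by norm_num) (by norm_num)
    norm_num at h
    linear_combination h
  have eA23 : (-1:ℂ)*(hinner a11 a21)*(hinner a21 a12) + (1:ℂ)*(hinner a12 a13) + (1:ℂ)*(hinner a21 a21)*(hinner a11 a12) = 0 := by
    have h := keyA 2 3 (by norm_num) (by norm_num)
    norm_num at h
    linear_combination h
  have eA24 : (-1:ℂ)*(hinner a11 a21)*(hinner a21 a13) + (1:ℂ)*(hinner a21 a21)*(hinner a11 a13) = 0 := by
    have h := keyA 2 4 (by norm_num) (by norm_num)
    norm_num at h
    linear_combination h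
  have eA32 : (-1:ℂ)*(hinner a21 a11)*(hinner a12 a21) + (1:ℂ)*(hinner a13 a12) + (1:ℂ)*(hinner a21 a21)*(hinner a12 a11) = 0 := by
    have h := keyA 3 2 (by norm_num) (by norm_num)
    norm_num at h
    linear_combination h
  have eA33 : (-4:ℂ) + (-1:ℂ)*(hinner a12 a21)*(hinner a21 a12) + (1:ℂ)*(hinner a13 a13) + (1:ℂ)*(hinner a12 a12)*(hinner a21 a21) = 0 := by
    have h := keyA 3 3 (by norm_num) (by norm_num)
    norm_num at h
    linear_combination h
  have eA34 : (-1:ℂ)*(hinner a12 a21)*(hinner a21 a13) + (1:ℂ)*(hinner a21 a21)*(hinner a12 a13) = 0 := by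
    have h := keyA 3 4 (by norm_num) (by norm_num)
    norm_num at h
    linear_combination h
  have eA44 : (-1:ℂ) + (-1:ℂ)*(hinner a13 a21)*(hinner a21 a13) + (1:ℂ)*(hinner a13 a13)*(hinner a21 a21) = 0 := by
    have h := keyA 4 4 (by norm_num) (by norm_num)
    norm_num at h
    linear_combination h
  have fB00 : (-1:ℂ)*((c:ℝ):ℂ) + (-1:ℂ)*(hinner a11 a21)*(hinner a21 a11) + (1:ℂ)*(hinner a11 a11)*(hinner a21 a21) = 0 := by
    have h := keyB 0 0 (by norm_num) (by norm_num)
    norm_num at h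
    linear_combination h
  have fB01 : (-2:ℂ)*(hinner a11 a21)*(hinner a21 a12) + (2:ℂ)*(hinner a21 a21)*(hinner a11 a12) = 0 := by
    have h := keyB 0 1 (by norm_num) (by norm_num)
    norm_num at h
    linear_combination h
  have fB10 : (-2:ℂ)*(hinner a21 a11)*(hinner a12 a21) + (2:ℂ)*(hinner a21 a21)*(hinner a12 a11) = 0 := by
    have h := keyB 1 0 (by norm_num) (by norm_num)
    norm_num at h
    linear_combination h
  have fB11 : (-4:ℂ)*((c:ℝ):ℂ) + (-4:ℂ)*(hinner a12 a21)*(hinner a21 a12) + (4:ℂ)*(hinner a12 a12)*(hinner a21 a21) = 0 := by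
    have h := keyB 1 1 (by norm_num) (by norm_num)
    norm_num at h
    linear_combination h
  have fB33 : (-4:ℂ)*((c:ℝ):ℂ) + (4:ℂ)*(hinner a13 a11)*(hinner a11 a21)*(hinner a21 a13) + (4:ℂ)*(hinner a11 a13)*(hinner a21 a11)*(hinner a13 a21) + (-4:ℂ)*(hinner a21 a21)*(hinner a11 a13)*(hinner a13 a11) + (-4:ℂ)*(hinner a13 a13)*(hinner a11 a21)*(hinner a21 a11) + (-4:ℂ)*(hinner a11 a11)*(hinner a13 a21)*(hinner a21 a13) + (4:ℂ)*(hinner a11 a11)*(hinner a13 a13)*(hinner a21 a21) = 0 := by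
    have h := keyB 3 3 (by norm_num) (by norm_num)
    norm_num at h
    linear_combination h
  have fB44 : (-1:ℂ)*((c:ℝ):ℂ) + (1:ℂ)*(hinner a13 a12)*(hinner a12 a21)*(hinner a21 a13) + (1:ℂ)*(hinner a12 a13)*(hinner a21 a12)*(hinner a13 a21) + (-1:ℂ)*(hinner a21 a21)*(hinner a12 a13)*(hinner a13 a12) + (-1:ℂ)*(hinner a13 a13)*(hinner a12 a21)*(hinner a21 a12) + (-1:ℂ)*(hinner a12 a12)*(hinner a13 a21)*(hinner a21 a13) + (1:ℂ)*(hinner a12 a12)*(hinner a13 a13)*(hinner a21 a21) = 0 := by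
    have h := keyB 4 4 (by norm_num) (by norm_num)
    norm_num at h
    linear_combination h
  have hal : (hinner a11 a12) = 0 := by linear_combination hal0
  have hbe : (hinner a11 a13) = 0 := by linear_combination hbe0
  have halb : (hinner a12 a11) = 0 := by linear_combination halb0
  have hbeb : (hinner a13 a11) = 0 := by linear_combination hbeb0
  have hstb : (hinner a11 a21)*(hinner a21 a12) = 0 := by linear_combination (-(1:ℂ)/2)*fB01 + (hinner a21 a21)*hal
  have hga : (hinner a12 a13) = 0 := by linear_combination eA23 - (hinner a21 a21)*hal + hstb
  have hsbt : (hinner a21 a11)*(hinner a12 a21) = 0 := by linear_combination (-(1:ℂ)/2)*fB10 + (hinner a21 a21)*halb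
  have hgab : (hinner a13 a12) = 0 := by linear_combination eA32 - (hinner a21 a21)*halb + hsbt
  have hsub : (hinner a11 a21)*(hinner a21 a13) = 0 := by linear_combination (-1:ℂ)*eA24 + (hinner a21 a21)*hbe
  have htub : (hinner a12 a21)*(hinner a21 a13) = 0 := by linear_combination (-1:ℂ)*eA34 + (hinner a21 a21)*hga
  have hcase : (hinner a13 a21) = 0 ∨ ((hinner a11 a21) = 0 ∧ (hinner a12 a21) = 0) := by
    rcases mul_eq_zero.mp hsub with hs | hub0
    · rcases mul_eq_zero.mp htub with ht | hub0'
      · exact Or.inr ⟨hs, ht⟩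
      · left
        have h2 := congrArg (starRingEnd ℂ) hub0'
        rwa [← hinner_conj, map_zero] at h2
    · left
      have h2 := congrArg (starRingEnd ℂ) hub0
      rwa [← hinner_conj, map_zero] at h2
  have hcne : ((c:ℝ):ℂ) ≠ 0 := Complex.ofReal_ne_zero.mpr hc.ne'
  obtain ⟨hc3, hA3, hB3, hC1, hD1, hs0, ht0, hu0⟩ :
      ((c:ℝ):ℂ) = 3 ∧ (hinner a11 a11) = 3 ∧ (hinner a12 a12) = 3 ∧ (hinner a13 a13) = 1 ∧
        (hinner a21 a21) = 1 ∧ (hinner a11 a21) = 0 ∧ (hinner a12 a21) = 0 ∧ (hinner a13 a21) = 0 := by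
    rcases hcase with hu | ⟨hs, ht⟩
    · have hCD : (hinner a13 a13)*(hinner a21 a21) = 1 := by linear_combination eA44 + (hinner a21 a13)*hu
      have hCc : ((c:ℝ):ℂ) * ((hinner a13 a13) - 1) = 0 := by
        linear_combination (1/4:ℂ)*fB33 - (hinner a13 a13)*fB00 - ((hinner a11 a21)*(hinner a21 a13))*hbeb - ((hinner a21 a11)*(hinner a13 a21))*hbe + ((hinner a21 a21)*(hinner a13 a11))*hbe + ((hinner a11 a11)*(hinner a21 a13))*hu
      have hC1 : (hinner a13 a13) = 1 := by
        rcases mul_eq_zero.mp hCc with h | h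
        · exact absurd h hcne
        · linear_combination h
      have hD1 : (hinner a21 a21) = 1 := by linear_combination hCD - (hinner a21 a21)*hC1
      have hc3 : ((c:ℝ):ℂ) = 3 := by linear_combination eA33 - (1/4:ℂ)*fB11 - hC1
      have hA3 : (hinner a11 a11) = 3 := by linear_combination eA11 - hD1
      have hB3 : (hinner a12 a12) = 3 := by linear_combination eA22 - fB00 - hc3
      have hssb : (hinner a11 a21) * (hinner a21 a11) = 0 := by
        linear_combination (-1:ℂ)*fB00 + (hinner a21 a21)*hA3 + (3:ℂ)*hD1 - hc3
      have hs0 : (hinner a11 a21) = 0 := by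
        rw [hinner_conj a11 a21, Complex.mul_conj] at hssb
        exact Complex.normSq_eq_zero.mp (Complex.ofReal_eq_zero.mp hssb)
      have httb : (hinner a12 a21) * (hinner a21 a12) = 0 := by
        linear_combination (-(1:ℂ)/4)*fB11 + (hinner a21 a21)*hB3 + (3:ℂ)*hD1 - hc3
      have ht0 : (hinner a12 a21) = 0 := by
        rw [hinner_conj a12 a21, Complex.mul_conj] at httb
        exact Complex.normSq_eq_zero.mp (Complex.ofReal_eq_zero.mp httb)
      exact ⟨hc3, hA3, hB3, hC1, hD1, hs0, ht0, hu⟩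
    · have hAc : (hinner a11 a11) = ((c:ℝ):ℂ) := by
        linear_combination (1/4:ℂ)*fB33 - ((hinner a13 a11)*(hinner a21 a13))*hs - ((hinner a21 a11)*(hinner a13 a21))*hbe + ((hinner a21 a21)*(hinner a13 a11))*hbe + ((hinner a13 a13)*(hinner a21 a11))*hs - (hinner a11 a11)*eA44
      have hBc : (hinner a12 a12) = ((c:ℝ):ℂ) := by
        linear_combination fB44 - ((hinner a13 a12)*(hinner a21 a13))*ht - ((hinner a21 a12)*(hinner a13 a21))*hga + ((hinner a21 a21)*(hinner a13 a12))*hga + ((hinner a13 a13)*(hinner a21 a12))*ht - (hinner a12 a12)*eA44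
      have hc3 : ((c:ℝ):ℂ) = 3 := by
        linear_combination (1/2:ℂ)*eA22 - (1/2:ℂ)*fB00 - (1/2:ℂ)*hBc
      have hA3 : (hinner a11 a11) = 3 := by linear_combination hAc + hc3
      have hB3 : (hinner a12 a12) = 3 := by linear_combination hBc + hc3
      have hD1 : (hinner a21 a21) = 1 := by linear_combination eA11 - hA3
      have hC1 : (hinner a13 a13) = 1 := by linear_combination eA33 - (1/4:ℂ)*fB11 - hc3
      have huub : (hinner a13 a21) * (hinner a21 a13) = 0 := by
        linear_combination (-1:ℂ)*eA44 + (hinner a21 a21)*hC1 + hD1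
      have hu0 : (hinner a13 a21) = 0 := by
        rw [hinner_conj a13 a21, Complex.mul_conj] at huub
        exact Complex.normSq_eq_zero.mp (Complex.ofReal_eq_zero.mp huub)
      exact ⟨hc3, hA3, hB3, hC1, hD1, hs, ht, hu0⟩
  -- epilogue
  have ha13E : a13 = ((lam:ℝ):ℂ) • (fun j : Fin n => if (j:ℕ) = 0 then (1:ℂ) else 0) := by
    rw [ha13]; funext j; by_cases hj : (j:ℕ) = 0 <;> simp [hj]
  have he1 : hinner (fun j : Fin n => if (j:ℕ) = 0 then (1:ℂ) else 0)
      (fun j : Fin n => if (j:ℕ) = 0 then (1:ℂ) else 0) = 1 := by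
    rw [hinner, Finset.sum_eq_single (⟨0, hn⟩ : Fin n)]
    · simp
    · intro j _ hj
      have hj' : (j:ℕ) ≠ 0 := fun h => hj (Fin.ext h)
      simp [hj']
    · intro h; exact absurd (Finset.mem_univ _) h
  have hlam1 : lam = 1 := by
    have hC := hC1
    rw [ha13E, hinner_smul_left, hinner_smul_right, Complex.conj_ofReal, he1] at hC
    have h2 : (lam : ℂ) * lam = 1 := by linear_combination hC
    have h3 : lam * lam = 1 := by exact_mod_cast h2
    rcases mul_self_eq_one_iff.mp h3 with h | h
    · exact h
    · linarith
  have hlne : ((lam:ℝ):ℂ) ≠ 0 := Complex.ofReal_ne_zero.mpr hlam.ne'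
  have hgaE : hinner a12 (fun j : Fin n => if (j:ℕ) = 0 then (1:ℂ) else 0) = 0 := by
    have h := hga; rw [ha13E, hinner_smul_right, Complex.conj_ofReal] at h
    exact (mul_eq_zero.mp h).resolve_left hlne
  have hbeE : hinner a11 (fun j : Fin n => if (j:ℕ) = 0 then (1:ℂ) else 0) = 0 := by
    have h := hbe; rw [ha13E, hinner_smul_right, Complex.conj_ofReal] at h
    exact (mul_eq_zero.mp h).resolve_left hlne
  have hub2 : hinner a21 a13 = 0 := by rw [hinner_conj a13 a21, hu0, map_zero]
  have hubE : hinner a21 (fun j : Fin n => if (j:ℕ) = 0 then (1:ℂ) else 0) = 0 := by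
    have h := hub2; rw [ha13E, hinner_smul_right, Complex.conj_ofReal] at h
    exact (mul_eq_zero.mp h).resolve_left hlne
  have hs3 : ((Real.sqrt 3 : ℝ) : ℂ) * ((Real.sqrt 3 : ℝ) : ℂ) = 3 := by
    rw [← Complex.ofReal_mul, Real.mul_self_sqrt (by norm_num : (0:ℝ) ≤ 3)]
    norm_num
  have hs3ne : ((Real.sqrt 3 : ℝ) : ℂ) ≠ 0 :=
    Complex.ofReal_ne_zero.mpr (Real.sqrt_pos.mpr (by norm_num)).ne'
  refine ⟨by exact_mod_cast hc3, hlam1,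
    ((Real.sqrt 3:ℝ):ℂ)⁻¹ • a12, ((Real.sqrt 3:ℝ):ℂ)⁻¹ • a11, a21,
    ?_, ?_, hD1, ?_, ?_, ?_, ?_, ?_, hubE, ?_, ?_, rfl⟩
  · rw [hinner_smul_left, hinner_smul_right, map_inv₀, Complex.conj_ofReal, hB3]
    field_simp
    linear_combination (-1:ℂ)*hs3
  · rw [hinner_smul_left, hinner_smul_right, map_inv₀, Complex.conj_ofReal, hA3]
    field_simp
    linear_combination (-1:ℂ)*hs3
  · rw [hinner_smul_left, hinner_smul_right, halb]; ring
  · rw [hinner_smul_left, ht0]; ring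
  · rw [hinner_smul_left, hs0]; ring
  · rw [hinner_smul_left, hgaE]; ring
  · rw [hinner_smul_left, hbeE]; ring
  · rw [smul_smul, mul_inv_cancel₀ hs3ne, one_smul]
  · rw [smul_smul, mul_inv_cancel₀ hs3ne, one_smul]
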